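/- Let G=(V,E) be a finite simple bipartite graph and let 1 ≤ k ≤ |V|. Then ε_k(G) ≤ k²/4 + (2k−1)·√k. -/

import Mathlib

open Finset

/-- The sum of the `k` largest values of `ev` (with multiplicity), expressed as the
supremum over all `k`-element index subsets of the sum of the corresponding values. -/
noncomputable def sumKLargest {n : Type*} [Fintype n] (ev : n → ℝ) (k : ℕ) : ℝ :=
  sSup {x : ℝ | ∃ s : Finset n, s.card = k ∧ x = ∑ i ∈ s, ev i}

/-- `ε_k(G) = λ_1(L(G)) + ⋯ + λ_k(L(G)) - |E(G)|`, where
`λ_1 ≥ λ_2 ≥ ⋯` are the eigenvalues of the Laplacian matrix of `G`. -/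
noncomputable def epsK {V : Type*} [Fintype V] [DecidableEq V] (G : SimpleGraph V)
    [DecidableRel G.Adj] (k : ℕ) : ℝ :=
  sumKLargest (SimpleGraph.posSemidef_lapMatrix ℝ G).isHermitian.eigenvalues k
    - G.edgeFinset.card

set_option linter.unusedVariables false
set_option linter.unusedSectionVars false

section aux

lemma gem (q D : ℝ) (hD : 0 < D) : 2 * |q| ≤ q^2 / D + D := by
  rw [div_add' _ _ _ hD.ne.symm, le_div_iff₀ hD]
  nlinarith [sq_nonneg (|q| - D), sq_abs q]

lemma inv_mul_le_inv_add (α β : ℝ) (hαp : 0 < α) (hβp : 0 < β) (hab1 : 1 ≤ α + β) :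
    (α*β)⁻¹ ≤ α⁻¹ + β⁻¹ := by
  rw [mul_inv]
  have hia : α * α⁻¹ = 1 := mul_inv_cancel₀ hαp.ne'
  have hib : β * β⁻¹ = 1 := mul_inv_cancel₀ hβp.ne'
  have h1 : 1 * (α⁻¹*β⁻¹) ≤ (α+β) * (α⁻¹*β⁻¹) :=
    mul_le_mul_of_nonneg_right hab1 (by positivity)
  have e1 : (α+β) * (α⁻¹*β⁻¹) = α⁻¹ + β⁻¹ := by field_simp; ring
  rw [e1] at h1
  linarith

lemma pair_bound (x γ : ℝ) (hx : 1 ≤ x) (hγ : 0 < γ)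
    (av aw q iav iaw Xvw : ℝ)
    (hav : 0 ≤ av) (hav1 : av ≤ 1) (haw : 0 ≤ aw) (haw1 : aw ≤ 1)
    (hq0v : av = 1 → q = 0) (hq0w : aw = 1 → q = 0)
    (hiav : av < 1 → iav = (1 - av)⁻¹) (hiav0 : 0 ≤ iav)
    (hiaw : aw < 1 → iaw = (1 - aw)⁻¹) (hiaw0 : 0 ≤ iaw)
    (hX0 : 0 ≤ Xvw) (hXmem : (1 - γ < av ∧ 1 - γ < aw) → γ^2/4 ≤ Xvw) :
    av + aw - 1 - 2*q ≤ av*aw + γ⁻¹ * (q^2*(iav+iaw)) + Xvw := by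
  have hspend : 0 ≤ γ⁻¹ * (q^2*(iav+iaw)) := by positivity
  rcases eq_or_lt_of_le hav1 with h1 | h1
  · rw [hq0v h1]; nlinarith
  rcases eq_or_lt_of_le haw1 with h2 | h2
  · rw [hq0w h2]; nlinarith
  obtain ⟨α, hα⟩ : ∃ α : ℝ, α = 1 - av := ⟨_, rfl⟩
  obtain ⟨β, hβ⟩ : ∃ β : ℝ, β = 1 - aw := ⟨_, rfl⟩
  have hαp : 0 < α := by rw [hα]; linarith
  have hβp : 0 < β := by rw [hβ]; linarith
  have hαβ : α*β = 1 - av - aw + av*aw := by rw [hα, hβ]; ring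
  have hiav' : iav = α⁻¹ := by rw [hiav h1, hα]
  have hiaw' : iaw = β⁻¹ := by rw [hiaw h2, hβ]
  obtain ⟨m, hm⟩ : ∃ m : ℝ, m = min α β := ⟨_, rfl⟩
  have hmp : 0 < m := by rw [hm]; exact lt_min hαp hβp
  have hmα : m ≤ α := by rw [hm]; exact min_le_left _ _
  have hmβ : m ≤ β := by rw [hm]; exact min_le_right _ _
  have hmor : m = α ∨ m = β := by rw [hm]; exact min_choice α β
  obtain ⟨D, hD⟩ : ∃ D : ℝ, D = max (α*β) (γ*m) := ⟨_, rfl⟩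
  have hDab : α*β ≤ D := by rw [hD]; exact le_max_left _ _
  have hDγm : γ*m ≤ D := by rw [hD]; exact le_max_right _ _
  have hDor : D = α*β ∨ D = γ*m := by rw [hD]; exact max_choice _ _
  have hDp : 0 < D := lt_of_lt_of_le (by positivity) hDγm
  have h2q : av + aw - 1 - 2*q ≤ av*aw - α*β + q^2/D + D := by
    have hg := gem q D hDp
    have habs : -(2*q) ≤ 2*|q| := by
      have := neg_abs_le q; linarith
    linarith [hg, habs, hαβ]
  have hsp : q^2/D ≤ γ⁻¹ * (q^2*(iav+iaw)) := by
    have h1' : q^2/D ≤ q^2/(γ*m) := by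
      apply div_le_div_of_nonneg_left (by positivity) (by positivity) hDγm
    have h2' : q^2/(γ*m) = γ⁻¹ * (q^2 * m⁻¹) := by
      rw [div_eq_mul_inv, mul_inv]; ring
    have h3' : m⁻¹ ≤ iav + iaw := by
      rw [hiav', hiaw']
      rcases hmor with h | h
      · rw [h]
        have : 0 ≤ β⁻¹ := by positivity
        linarith
      · rw [h]
        have : 0 ≤ α⁻¹ := by positivity
        linarith
    calc q^2/D ≤ q^2/(γ*m) := h1'
      _ = γ⁻¹ * (q^2 * m⁻¹) := h2'
      _ ≤ γ⁻¹ * (q^2*(iav+iaw)) := by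
          apply mul_le_mul_of_nonneg_left _ (by positivity)
          exact mul_le_mul_of_nonneg_left h3' (sq_nonneg q)
  have hXb : D - α*β ≤ Xvw := by
    by_cases hc : (1 - γ < av ∧ 1 - γ < aw)
    · have hXv := hXmem hc
      have hmm : m^2 ≤ α*β := by rw [sq]; exact mul_le_mul hmα hmβ hmp.le hαp.le
      have hD2 : D ≤ α*β + γ^2/4 := by
        have hγ4 : 0 ≤ γ^2/4 := by positivity
        have hexp : (m - γ/2)^2 = m^2 - γ*m + γ^2/4 := by ring
        rcases hDor with h | h
        · rw [h]; linarith
        · rw [h]; linarith [sq_nonneg (m - γ/2), hexp.le, hexp.ge, hmm]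
      linarith
    · push_neg at hc
      have hDeq : D = α*β := by
        rcases hDor with h | h
        · exact h
        · rw [h]
          by_cases hc1 : 1 - γ < av
          · have hc2 := hc hc1
            have hγβ : γ ≤ β := by rw [hβ]; linarith
            have : γ * m ≤ β * α := mul_le_mul hγβ hmα hmp.le hβp.le
            have e : β * α = α * β := mul_comm β α
            linarith [this]
          · push_neg at hc1
            have hγα : γ ≤ α := by rw [hα]; linarith
            have : γ * m ≤ α * β := mul_le_mul hγα hmβ hmp.le hαp.le
            linarith
      rw [hDeq]
      simpa using hX0
  linarith [h2q, hsp, hXb]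

lemma pair_bound_one (av aw q iav iaw : ℝ)
    (hav : 0 ≤ av) (hav1 : av ≤ 1) (haw : 0 ≤ aw) (haw1 : aw ≤ 1)
    (hsum : av + aw ≤ 1)
    (hq0v : av = 1 → q = 0) (hq0w : aw = 1 → q = 0)
    (hiav : av < 1 → iav = (1 - av)⁻¹) (hiav0 : 0 ≤ iav)
    (hiaw : aw < 1 → iaw = (1 - aw)⁻¹) (hiaw0 : 0 ≤ iaw) :
    av + aw - 1 - 2*q ≤ av*aw + q^2*(iav+iaw) := by
  have hspend : 0 ≤ q^2*(iav+iaw) := by positivity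
  rcases eq_or_lt_of_le hav1 with h1 | h1
  · rw [hq0v h1]; nlinarith
  rcases eq_or_lt_of_le haw1 with h2 | h2
  · rw [hq0w h2]; nlinarith
  obtain ⟨α, hα⟩ : ∃ α : ℝ, α = 1 - av := ⟨_, rfl⟩
  obtain ⟨β, hβ⟩ : ∃ β : ℝ, β = 1 - aw := ⟨_, rfl⟩
  have hαp : 0 < α := by rw [hα]; linarith
  have hβp : 0 < β := by rw [hβ]; linarith
  have hαβ : α*β = 1 - av - aw + av*aw := by rw [hα, hβ]; ring
  have hab1 : 1 ≤ α + β := by rw [hα, hβ]; linarith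
  have hiav' : iav = α⁻¹ := by rw [hiav h1, hα]
  have hiaw' : iaw = β⁻¹ := by rw [hiaw h2, hβ]
  have h2q : av + aw - 1 - 2*q ≤ av*aw - α*β + q^2/(α*β) + α*β := by
    have hg := gem q (α*β) (by positivity)
    have habs : -(2*q) ≤ 2*|q| := by have := neg_abs_le q; linarith
    linarith [hg, habs, hαβ]
  have hsp : q^2/(α*β) ≤ q^2*(iav+iaw) := by
    rw [hiav', hiaw', div_eq_mul_inv]
    exact mul_le_mul_of_nonneg_left (inv_mul_le_inv_add α β hαp hβp hab1) (sq_nonneg q)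
  linarith [h2q, hsp]


lemma hkey_lemma (k : ℕ) (hk2 : 2 ≤ k) (x : ℝ) (hx2 : x^2 = k) (hx0 : 0 < x) :
    500*(k:ℝ)^2 ≤ (19*(k:ℝ)-20)*x*(21*x-20)^2 := by
  have hk2' : (2:ℝ) ≤ (k:ℝ) := by exact_mod_cast hk2
  have hx3 : x^3 = (k:ℝ)*x := by
    rw [pow_succ, hx2]
  have e1 : (19*(k:ℝ)-20)*x*(21*x-20)^2
      = (19*(k:ℝ)-20)*(441*((k:ℝ)*x) - 840*(k:ℝ) + 400*x) := by
    rw [← hx3, ← hx2]; ring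
  rw [e1]
  by_cases hk6 : 6 ≤ k
  · have hk6' : (6:ℝ) ≤ (k:ℝ) := by exact_mod_cast hk6
    have h441 : 1080 ≤ 441*x := by nlinarith
    have h19 : (18:ℝ) ≤ 19*(k:ℝ)-20 := by linarith
    have hxp : 0 ≤ 400*x := by linarith
    have step1 : (19*(k:ℝ)-20)*(441*((k:ℝ)*x) - 840*(k:ℝ))
        ≤ (19*(k:ℝ)-20)*(441*((k:ℝ)*x) - 840*(k:ℝ) + 400*x) := by
      apply mul_le_mul_of_nonneg_left (by linarith) (by linarith)
    have step2 : 500*(k:ℝ)^2 ≤ (19*(k:ℝ)-20)*(441*((k:ℝ)*x) - 840*(k:ℝ)) := by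
      have e2 : (19*(k:ℝ)-20)*(441*((k:ℝ)*x) - 840*(k:ℝ))
          = (k:ℝ)*((19*(k:ℝ)-20)*(441*x - 840)) := by ring
      rw [e2]
      have h240 : (240:ℝ) ≤ 441*x - 840 := by linarith
      nlinarith
    linarith
  · push_neg at hk6
    interval_cases k <;> norm_num at hx2 e1 ⊢
    · have hxr : (7:ℝ)/5 ≤ x := by nlinarith
      nlinarith
    · have hxr : (17:ℝ)/10 ≤ x := by nlinarith
      nlinarith
    · have hxr : (2:ℝ) ≤ x := by nlinarith
      nlinarith
    · have hxr : (11:ℝ)/5 ≤ x := by nlinarith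
      nlinarith

lemma numeric (k : ℕ) (hk2 : 2 ≤ k) (x γ sA sB kA kB : ℝ)
    (hx2 : x^2 = k) (hx0 : 0 < x) (hγ : γ = 20/(21*x))
    (hkA : 0 ≤ kA) (hkB : 0 ≤ kB) (hksum : kA + kB = k)
    (hsA : 0 ≤ sA) (hsB : 0 ≤ sB)
    (hsAk : sA * (1-γ) ≤ kA) (hsBk : sB * (1-γ) ≤ kB) :
    kA*kB + 21/20*(k:ℝ)*x + γ^2/4 * (sA*sB) ≤ (k:ℝ)^2/4 + (2*(k:ℝ)-1)*x := by
  have hk2' : (2:ℝ) ≤ (k:ℝ) := by exact_mod_cast hk2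
  have hx75 : 7/5 ≤ x := by nlinarith
  have hy : 0 < 21*x - 20 := by linarith
  have h21x : 0 < 21*x := by linarith
  have hPP : kA*kB ≤ (k:ℝ)^2/4 := by nlinarith [sq_nonneg (kA-kB)]
  have hcval : (1-γ)*(21*x) = 21*x - 20 := by
    rw [hγ]; field_simp
  have hcpos : 0 < 1 - γ := by
    have := hcval
    nlinarith
  have hsA2 : sA*(21*x-20) ≤ kA*(21*x) := by
    calc sA*(21*x-20) = (sA*(1-γ))*(21*x) := by rw [← hcval]; ring
      _ ≤ kA*(21*x) := mul_le_mul_of_nonneg_right hsAk h21x.le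
  have hsB2 : sB*(21*x-20) ≤ kB*(21*x) := by
    calc sB*(21*x-20) = (sB*(1-γ))*(21*x) := by rw [← hcval]; ring
      _ ≤ kB*(21*x) := mul_le_mul_of_nonneg_right hsBk h21x.le
  have hsABy : (sA*sB)*(21*x-20)^2 ≤ (kA*kB)*(21*x)^2 := by
    have h := mul_le_mul hsA2 hsB2 (by positivity) (by positivity)
    nlinarith [h]
  have hγsq : γ^2 = 400/(21*x)^2 := by
    rw [hγ, div_pow]; norm_num
  have h3 : γ^2/4*(sA*sB) = 100*(sA*sB)/(21*x)^2 := by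
    rw [hγsq]; ring
  have hkey := hkey_lemma k hk2 x hx2 hx0
  have h4 : 100*(sA*sB)/(21*x)^2 ≤ 25*(k:ℝ)^2/(21*x-20)^2 := by
    rw [div_le_div_iff₀ (by positivity) (by positivity)]
    nlinarith [hsABy, hPP, sq_nonneg (21*x)]
  have h5 : 25*(k:ℝ)^2/(21*x-20)^2 ≤ (19*(k:ℝ)-20)/20*x := by
    rw [div_le_iff₀ (by positivity)]
    nlinarith [hkey]
  have hcoef : 21/20*(k:ℝ)*x + (19*(k:ℝ)-20)/20*x = (2*(k:ℝ)-1)*x := by ring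
  linarith [h3, h4, h5, hPP]


variable {V : Type*} [Fintype V] [DecidableEq V]

lemma nbr_swap (G : SimpleGraph V) [DecidableRel G.Adj] (f : V → V → ℝ) :
    ∑ v, ∑ w ∈ G.neighborFinset v, f v w = ∑ v, ∑ w ∈ G.neighborFinset v, f w v := by
  have h1 : ∀ (g : V → V → ℝ), (∑ v, ∑ w ∈ G.neighborFinset v, g v w)
      = ∑ v, ∑ w, if G.Adj v w then g v w else 0 := by
    intro g
    refine Finset.sum_congr rfl fun v _ => ?_
    rw [SimpleGraph.neighborFinset_eq_filter, Finset.sum_filter]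
  rw [h1, h1, Finset.sum_comm]
  refine Finset.sum_congr rfl fun v _ => Finset.sum_congr rfl fun w _ => ?_
  by_cases h : G.Adj v w
  · rw [if_pos h, if_pos (G.adj_symm h)]
  · rw [if_neg h, if_neg (fun h' => h (G.adj_symm h'))]

section core
variable (G : SimpleGraph V) [DecidableRel G.Adj]

-- sum over neighbors of a's, one-side bound
lemma sum_nbr_le (A : Finset V) (hA : ∀ u v : V, G.Adj u v → (u ∈ A ↔ v ∉ A))
    (g : V → V → ℝ) (hg : ∀ v w, 0 ≤ g v w) :
    ∑ v, ∑ w ∈ G.neighborFinset v, g v w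
      ≤ ∑ v ∈ A, ∑ w ∈ Aᶜ, g v w + ∑ v ∈ Aᶜ, ∑ w ∈ A, g v w := by
  rw [← Finset.sum_add_sum_compl A (fun v => ∑ w ∈ G.neighborFinset v, g v w)]
  apply add_le_add
  · apply Finset.sum_le_sum; intro v hv
    apply Finset.sum_le_sum_of_subset_of_nonneg
    · intro w hw
      rw [SimpleGraph.mem_neighborFinset] at hw
      rw [Finset.mem_compl]
      exact (hA v w hw).mp hv
    · intro w _ _; exact hg v w
  · apply Finset.sum_le_sum; intro v hv
    apply Finset.sum_le_sum_of_subset_of_nonneg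
    · intro w hw
      rw [SimpleGraph.mem_neighborFinset] at hw
      rw [Finset.mem_compl] at hv
      by_contra hwA
      exact hv ((hA v w hw).mpr hwA)
    · intro w _ _; exact hg v w
end core


theorem core (G : SimpleGraph V) [DecidableRel G.Adj]
    (A : Finset V) (hA : ∀ u v : V, G.Adj u v → (u ∈ A ↔ v ∉ A))
    (k : ℕ) (hk1 : 1 ≤ k)
    (a : V → ℝ) (p : V → V → ℝ)
    (ha0 : ∀ v, 0 ≤ a v) (ha1 : ∀ v, a v ≤ 1)
    (hsum : ∑ v, a v = (k:ℝ))
    (hp : ∀ v w, p v w = p w v)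
    (hrow : ∀ v, ∑ w ∈ Finset.univ.erase v, (p v w)^2 ≤ a v * (1 - a v)) :
    (∑ v, ∑ w ∈ G.neighborFinset v, (a v + a w - 1 - 2 * p v w)) / 2
      ≤ (k:ℝ)^2/4 + (2*(k:ℝ)-1) * Real.sqrt k := by
  classical
  have hk0 : (0:ℝ) < k := by
    have : (1:ℝ) ≤ k := by exact_mod_cast hk1
    linarith
  set x := Real.sqrt k with hxdef
  have hx2 : x^2 = k := Real.sq_sqrt hk0.le
  have hx0 : 0 < x := Real.sqrt_pos.mpr hk0
  set ia : V → ℝ := fun v => if a v < 1 then (1 - a v)⁻¹ else 0 with hiadef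
  have hia0 : ∀ v, 0 ≤ ia v := by
    intro v
    by_cases h : a v < 1
    · have h1 : 0 < 1 - a v := by linarith
      simp only [hiadef, if_pos h]
      positivity
    · simp [hiadef, h]
  have hiaeq : ∀ v, a v < 1 → ia v = (1 - a v)⁻¹ := by
    intro v h; simp [hiadef, h]
  have hq0 : ∀ v w, v ≠ w → a v = 1 → p v w = 0 := by
    intro v w hvw h1
    have h2 : ∑ w ∈ Finset.univ.erase v, (p v w)^2 ≤ 0 := by
      have h2' := hrow v
      rw [h1] at h2'
      simp only [sub_self, mul_zero] at h2'
      exact h2'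
    have h3 : (p v w)^2 ≤ 0 :=
      le_trans (Finset.single_le_sum (f := fun w => (p v w)^2)
        (fun i _ => sq_nonneg _) (Finset.mem_erase.mpr ⟨hvw.symm, Finset.mem_univ w⟩)) h2
    exact sq_eq_zero_iff.mp (le_antisymm h3 (sq_nonneg _))
  have hrow' : ∀ v, ∑ w ∈ G.neighborFinset v, (p v w)^2 ≤ a v * (1 - a v) := by
    intro v
    refine le_trans (Finset.sum_le_sum_of_subset_of_nonneg ?_ ?_) (hrow v)
    · intro w hw
      rw [SimpleGraph.mem_neighborFinset] at hw
      exact Finset.mem_erase.mpr ⟨hw.ne', Finset.mem_univ w⟩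
    · intro w _ _; exact sq_nonneg _
  have SP : ∑ v, ia v * (∑ w ∈ G.neighborFinset v, (p v w)^2) ≤ (k:ℝ) := by
    rw [← hsum]
    apply Finset.sum_le_sum
    intro v _
    by_cases h : a v < 1
    · rw [hiaeq v h]
      have h1 : 0 < 1 - a v := by linarith
      calc (1 - a v)⁻¹ * (∑ w ∈ G.neighborFinset v, (p v w)^2)
          ≤ (1 - a v)⁻¹ * (a v * (1 - a v)) :=
            mul_le_mul_of_nonneg_left (hrow' v) (by positivity)
        _ = a v := by field_simp
    · have hz : ia v = 0 := by simp [hiadef, h]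
      rw [hz, zero_mul]
      exact ha0 v
  have SPEND : ∑ v, ∑ w ∈ G.neighborFinset v, (p v w)^2 * (ia v + ia w) ≤ 2*(k:ℝ) := by
    have e1 : (∑ v, ∑ w ∈ G.neighborFinset v, (p v w)^2 * (ia v + ia w))
        = (∑ v, ∑ w ∈ G.neighborFinset v, (p v w)^2 * ia v)
          + (∑ v, ∑ w ∈ G.neighborFinset v, (p v w)^2 * ia w) := by
      rw [← Finset.sum_add_distrib]
      refine Finset.sum_congr rfl fun v _ => ?_
      rw [← Finset.sum_add_distrib]
      refine Finset.sum_congr rfl fun w _ => by ring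
    have e2 : (∑ v, ∑ w ∈ G.neighborFinset v, (p v w)^2 * ia w)
        = (∑ v, ∑ w ∈ G.neighborFinset v, (p v w)^2 * ia v) := by
      calc (∑ v, ∑ w ∈ G.neighborFinset v, (p v w)^2 * ia w)
          = (∑ v, ∑ w ∈ G.neighborFinset v, (p w v)^2 * ia w) := by
            refine Finset.sum_congr rfl fun v _ => Finset.sum_congr rfl fun w _ => by rw [hp v w]
        _ = (∑ v, ∑ w ∈ G.neighborFinset v, (p v w)^2 * ia v) :=
            (nbr_swap G (fun v w => (p v w)^2 * ia v)).symm
    have e3 : (∑ v, ∑ w ∈ G.neighborFinset v, (p v w)^2 * ia v)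
        = ∑ v, ia v * (∑ w ∈ G.neighborFinset v, (p v w)^2) := by
      refine Finset.sum_congr rfl fun v _ => ?_
      rw [Finset.mul_sum]
      refine Finset.sum_congr rfl fun w _ => by ring
    rw [e1, e2, e3]
    linarith [SP]
  set kA := ∑ v ∈ A, a v with hkAdef
  set kB := ∑ v ∈ Aᶜ, a v with hkBdef
  have hkAB : kA + kB = (k:ℝ) := by rw [hkAdef, hkBdef, Finset.sum_add_sum_compl, hsum]
  have hkA0 : 0 ≤ kA := Finset.sum_nonneg fun v _ => ha0 v
  have hkB0 : 0 ≤ kB := Finset.sum_nonneg fun v _ => ha0 v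
  have SUMaa : ∑ v, ∑ w ∈ G.neighborFinset v, a v * a w ≤ 2*(kA*kB) := by
    refine le_trans (sum_nbr_le G A hA _ (fun v w => mul_nonneg (ha0 v) (ha0 w))) ?_
    have e1 : (∑ v ∈ A, ∑ w ∈ Aᶜ, a v * a w) = kA * kB := (Finset.sum_mul_sum A Aᶜ a a).symm
    have e2 : (∑ v ∈ Aᶜ, ∑ w ∈ A, a v * a w) = kB * kA := (Finset.sum_mul_sum Aᶜ A a a).symm
    rw [e1, e2]; ring_nf; rfl
  rcases eq_or_lt_of_le hk1 with hk1' | hk2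
  · -- k = 1
    have hkr : (k:ℝ) = 1 := by rw [← hk1']; norm_num
    have key : ∀ v w, G.Adj v w →
        a v + a w - 1 - 2 * p v w ≤ a v * a w + (p v w)^2*(ia v + ia w) := by
      intro v w hadj
      have hvw : a v + a w ≤ 1 := by
        by_cases hvA : v ∈ A
        · have hwB : w ∉ A := (hA v w hadj).mp hvA
          have h1 : a v ≤ kA := Finset.single_le_sum (fun i _ => ha0 i) hvA
          have h2 : a w ≤ kB := Finset.single_le_sum (fun i _ => ha0 i) (Finset.mem_compl.mpr hwB)
          rw [hkr] at hkAB
          linarith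
        · have hwA : w ∈ A := by
            by_contra hw
            exact hvA ((hA v w hadj).mpr hw)
          have h1 : a w ≤ kA := Finset.single_le_sum (fun i _ => ha0 i) hwA
          have h2 : a v ≤ kB := Finset.single_le_sum (fun i _ => ha0 i) (Finset.mem_compl.mpr hvA)
          rw [hkr] at hkAB
          linarith
      exact pair_bound_one (a v) (a w) (p v w) (ia v) (ia w) (ha0 v) (ha1 v) (ha0 w) (ha1 w) hvw
        (fun h => hq0 v w hadj.ne h)
        (fun h => by rw [hp v w]; exact hq0 w v hadj.ne' h)
        (hiaeq v) (hia0 v) (hiaeq w) (hia0 w)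
    have hT : (∑ v, ∑ w ∈ G.neighborFinset v, (a v + a w - 1 - 2 * p v w))
        ≤ 2*(kA*kB) + 2*(k:ℝ) := by
      have step1 : (∑ v, ∑ w ∈ G.neighborFinset v, (a v + a w - 1 - 2 * p v w))
          ≤ ∑ v, ∑ w ∈ G.neighborFinset v, (a v * a w + (p v w)^2*(ia v + ia w)) := by
        refine Finset.sum_le_sum fun v _ => Finset.sum_le_sum fun w hw => ?_
        exact key v w (by rwa [SimpleGraph.mem_neighborFinset] at hw)
      have step2 : (∑ v, ∑ w ∈ G.neighborFinset v, (a v * a w + (p v w)^2*(ia v + ia w)))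
          = (∑ v, ∑ w ∈ G.neighborFinset v, a v * a w)
            + (∑ v, ∑ w ∈ G.neighborFinset v, (p v w)^2*(ia v + ia w)) := by
        rw [← Finset.sum_add_distrib]
        exact Finset.sum_congr rfl fun v _ => by rw [← Finset.sum_add_distrib]
      linarith [SUMaa, SPEND]
    have hkab1 : kA*kB ≤ 1/4 := by
      rw [hkr] at hkAB
      nlinarith [sq_nonneg (kA - kB)]
    have hx1 : x = 1 := by rw [hxdef, hkr, Real.sqrt_one]
    have hRHS : (k:ℝ)^2/4 + (2*(k:ℝ)-1)*x = 5/4 := by rw [hkr, hx1]; norm_num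
    rw [hkr] at hT
    linarith
  · -- 2 ≤ k
    have hk2' : 2 ≤ k := hk2
    have hx1 : 1 ≤ x := by
      rw [hxdef]
      rw [show (1:ℝ) = Real.sqrt 1 from (Real.sqrt_one).symm]
      apply Real.sqrt_le_sqrt
      have : (1:ℝ) ≤ (k:ℝ) := by exact_mod_cast hk1
      linarith
    set γ := 20/(21*x) with hγdef
    have hγ0 : 0 < γ := by
      apply div_pos
      · norm_num
      · linarith
    have hγinv : γ⁻¹ = 21*x/20 := by rw [hγdef, inv_div]
    set X : V → V → ℝ := fun v w => if (1 - γ < a v ∧ 1 - γ < a w) then γ^2/4 else 0 with hXdef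
    have hX0 : ∀ v w, 0 ≤ X v w := by
      intro v w
      simp only [hXdef]
      split
      · positivity
      · exact le_refl _
    have hXmem : ∀ v w, (1 - γ < a v ∧ 1 - γ < a w) → γ^2/4 ≤ X v w := by
      intro v w h
      simp only [hXdef, if_pos h]
      exact le_refl _
    have key : ∀ v w, G.Adj v w →
        a v + a w - 1 - 2 * p v w
          ≤ a v * a w + γ⁻¹*((p v w)^2*(ia v + ia w)) + X v w := by
      intro v w hadj
      exact pair_bound x γ hx1 hγ0 (a v) (a w) (p v w) (ia v) (ia w) (X v w)
        (ha0 v) (ha1 v) (ha0 w) (ha1 w) (fun h => hq0 v w hadj.ne h)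
        (fun h => by rw [hp v w]; exact hq0 w v hadj.ne' h)
        (hiaeq v) (hia0 v) (hiaeq w) (hia0 w) (hX0 v w) (hXmem v w)
    set χ : V → ℝ := fun v => if 1 - γ < a v then (1:ℝ) else 0 with hχdef
    have hχ0 : ∀ v, 0 ≤ χ v := by
      intro v
      simp only [hχdef]
      split
      · norm_num
      · exact le_refl _
    set sA := ∑ v ∈ A, χ v with hsAdef
    set sB := ∑ v ∈ Aᶜ, χ v with hsBdef
    have hsA0 : 0 ≤ sA := Finset.sum_nonneg fun v _ => hχ0 v
    have hsB0 : 0 ≤ sB := Finset.sum_nonneg fun v _ => hχ0 v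
    have hXχ : ∀ v w, X v w ≤ γ^2/4*(χ v * χ w) := by
      intro v w
      simp only [hXdef, hχdef]
      by_cases h : (1 - γ < a v ∧ 1 - γ < a w)
      · rw [if_pos h, if_pos h.1, if_pos h.2, mul_one, mul_one]
      · rw [if_neg h]
        have h1 : (0:ℝ) ≤ if 1 - γ < a v then (1:ℝ) else 0 := by split <;> norm_num
        have h2 : (0:ℝ) ≤ if 1 - γ < a w then (1:ℝ) else 0 := by split <;> norm_num
        positivity
    have SUMX : ∑ v, ∑ w ∈ G.neighborFinset v, X v w ≤ 2*(γ^2/4*(sA*sB)) := by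
      refine le_trans (sum_nbr_le G A hA X hX0) ?_
      have b1 : ∑ v ∈ A, ∑ w ∈ Aᶜ, X v w ≤ γ^2/4*(sA*sB) := by
        have e : γ^2/4*(sA*sB) = ∑ v ∈ A, ∑ w ∈ Aᶜ, γ^2/4*(χ v*χ w) := by
          rw [hsAdef, hsBdef, Finset.sum_mul_sum A Aᶜ χ χ, Finset.mul_sum]
          exact Finset.sum_congr rfl fun v _ => by rw [Finset.mul_sum]
        rw [e]
        exact Finset.sum_le_sum fun v _ => Finset.sum_le_sum fun w _ => hXχ v w
      have b2 : ∑ v ∈ Aᶜ, ∑ w ∈ A, X v w ≤ γ^2/4*(sB*sA) := by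
        have e : γ^2/4*(sB*sA) = ∑ v ∈ Aᶜ, ∑ w ∈ A, γ^2/4*(χ v*χ w) := by
          rw [hsAdef, hsBdef, Finset.sum_mul_sum Aᶜ A χ χ, Finset.mul_sum]
          exact Finset.sum_congr rfl fun v _ => by rw [Finset.mul_sum]
        rw [e]
        exact Finset.sum_le_sum fun v _ => Finset.sum_le_sum fun w _ => hXχ v w
      have e2 : sB*sA = sA*sB := mul_comm _ _
      rw [e2] at b2
      linarith
    have hsAk : sA * (1-γ) ≤ kA := by
      rw [hsAdef, Finset.sum_mul]
      apply Finset.sum_le_sum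
      intro v hv
      simp only [hχdef]
      by_cases h : 1 - γ < a v
      · rw [if_pos h, one_mul]; linarith
      · rw [if_neg h, zero_mul]; exact ha0 v
    have hsBk : sB * (1-γ) ≤ kB := by
      rw [hsBdef, Finset.sum_mul]
      apply Finset.sum_le_sum
      intro v hv
      simp only [hχdef]
      by_cases h : 1 - γ < a v
      · rw [if_pos h, one_mul]; linarith
      · rw [if_neg h, zero_mul]; exact ha0 v
    have hT : (∑ v, ∑ w ∈ G.neighborFinset v, (a v + a w - 1 - 2 * p v w))
        ≤ 2*(kA*kB) + γ⁻¹*(2*(k:ℝ)) + 2*(γ^2/4*(sA*sB)) := by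
      have step1 : (∑ v, ∑ w ∈ G.neighborFinset v, (a v + a w - 1 - 2 * p v w))
          ≤ ∑ v, ∑ w ∈ G.neighborFinset v,
              (a v * a w + γ⁻¹*((p v w)^2*(ia v + ia w)) + X v w) := by
        refine Finset.sum_le_sum fun v _ => Finset.sum_le_sum fun w hw => ?_
        exact key v w (by rwa [SimpleGraph.mem_neighborFinset] at hw)
      have step2 : (∑ v, ∑ w ∈ G.neighborFinset v,
              (a v * a w + γ⁻¹*((p v w)^2*(ia v + ia w)) + X v w))
          = (∑ v, ∑ w ∈ G.neighborFinset v, a v * a w)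
            + γ⁻¹*(∑ v, ∑ w ∈ G.neighborFinset v, (p v w)^2*(ia v + ia w))
            + (∑ v, ∑ w ∈ G.neighborFinset v, X v w) := by
        rw [Finset.mul_sum, ← Finset.sum_add_distrib, ← Finset.sum_add_distrib]
        refine Finset.sum_congr rfl fun v _ => ?_
        rw [Finset.mul_sum, ← Finset.sum_add_distrib, ← Finset.sum_add_distrib]
      have hspge : γ⁻¹*(∑ v, ∑ w ∈ G.neighborFinset v, (p v w)^2*(ia v + ia w)) ≤ γ⁻¹*(2*(k:ℝ)) :=
        mul_le_mul_of_nonneg_left SPEND (by positivity)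
      linarith [SUMaa, SUMX]
    have hnum := numeric k hk2' x γ sA sB kA kB hx2 hx0 hγdef hkA0 hkB0 hkAB hsA0 hsB0 hsAk hsBk
    have e3 : γ⁻¹*(k:ℝ) = 21/20*(k:ℝ)*x := by rw [hγinv]; ring
    linarith


lemma test1 (B : Matrix V V ℝ) (hB : B.IsHermitian) (i j : V) :
    (∑ v, hB.eigenvectorBasis i v * hB.eigenvectorBasis j v) = if i = j then 1 else 0 := by
  have h := hB.eigenvectorBasis.orthonormal
  rw [orthonormal_iff_ite] at h
  have h2 := h i j
  rw [← h2, PiLp.inner_apply]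
  simp [RCLike.inner_apply, mul_comm]

lemma test2 (B : Matrix V V ℝ) (hB : B.IsHermitian) (v w : V) :
    (∑ i, hB.eigenvectorBasis i v * hB.eigenvectorBasis i w) = if v = w then 1 else 0 := by
  have h := hB.eigenvectorBasis.sum_inner_mul_inner (EuclideanSpace.single v (1:ℝ))
    (EuclideanSpace.single w (1:ℝ))
  simp only [EuclideanSpace.inner_single_left, EuclideanSpace.inner_single_right,
    starRingEnd_apply, star_trivial, one_mul, mul_one] at h
  rw [h, EuclideanSpace.single_apply]
  simp [eq_comm]

lemma test3 (B : Matrix V V ℝ) (hB : B.IsHermitian) (i : V) :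
    hB.eigenvalues i = ∑ v, ∑ w, B v w * (hB.eigenvectorBasis i v * hB.eigenvectorBasis i w) := by
  have h := hB.mulVec_eigenvectorBasis i
  have h2 : ∀ v, (∑ w, B v w * hB.eigenvectorBasis i w) = hB.eigenvalues i * hB.eigenvectorBasis i v := by
    intro v
    have := congrFun h v
    simpa [Matrix.mulVec, dotProduct] using this
  have h3 : (∑ v, hB.eigenvectorBasis i v * ∑ w, B v w * hB.eigenvectorBasis i w)
      = hB.eigenvalues i := by
    simp_rw [h2]
    have ht := test1 B hB i i
    simp at ht
    calc (∑ v, hB.eigenvectorBasis i v * (hB.eigenvalues i * hB.eigenvectorBasis i v))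
        = hB.eigenvalues i * ∑ v, hB.eigenvectorBasis i v * hB.eigenvectorBasis i v := by
          rw [Finset.mul_sum]; exact Finset.sum_congr rfl fun v _ => by ring
      _ = hB.eigenvalues i := by rw [ht]; ring
  rw [← h3]
  rw [Finset.sum_congr rfl fun v _ => Finset.mul_sum _ _ _]
  exact Finset.sum_congr rfl fun v _ => Finset.sum_congr rfl fun w _ => by ring


end aux

theorem stmt_19 {V : Type*} [Fintype V] [DecidableEq V] (G : SimpleGraph V)
    [DecidableRel G.Adj]
    (hbip : ∃ A : Set V, ∀ u v : V, G.Adj u v → (u ∈ A ↔ v ∉ A))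
    (k : ℕ) (hk1 : 1 ≤ k) (hkn : k ≤ Fintype.card V) :
    epsK G k ≤ (k : ℝ) ^ 2 / 4 + (2 * (k : ℝ) - 1) * Real.sqrt k := by
  classical
  obtain ⟨A₀, hA₀⟩ := hbip
  set A : Finset V := Finset.univ.filter (fun v => v ∈ A₀) with hAdef
  have hA : ∀ u v : V, G.Adj u v → (u ∈ A ↔ v ∉ A) := by
    intro u v huv
    simp only [hAdef, Finset.mem_filter, Finset.mem_univ, true_and]
    exact hA₀ u v huv
  set L : Matrix V V ℝ := G.lapMatrix ℝ with hLdef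
  have hH : L.IsHermitian := (SimpleGraph.posSemidef_lapMatrix ℝ G).isHermitian
  set μ : V → ℝ := hH.eigenvalues with hμdef
  set u : V → EuclideanSpace ℝ V := fun i => hH.eigenvectorBasis i with hudef
  -- extract maximizing subset
  have hfin : {x : ℝ | ∃ t : Finset V, t.card = k ∧ x = ∑ i ∈ t, μ i}.Finite := by
    apply Set.Finite.subset (Finset.finite_toSet
      ((Finset.univ : Finset (Finset V)).image (fun t => ∑ i ∈ t, μ i)))
    rintro y ⟨t, _, rfl⟩
    simp only [Finset.coe_image, Set.mem_image, Finset.mem_coe, Finset.mem_univ]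
    exact ⟨t, trivial, rfl⟩
  have hne : {x : ℝ | ∃ t : Finset V, t.card = k ∧ x = ∑ i ∈ t, μ i}.Nonempty := by
    obtain ⟨t, _, ht⟩ := Finset.exists_subset_card_eq
      (show k ≤ (Finset.univ : Finset V).card by rwa [Finset.card_univ])
    exact ⟨∑ i ∈ t, μ i, t, ht, rfl⟩
  obtain ⟨s, hscard, hsval⟩ := hne.csSup_mem hfin
  -- p and a
  set p : V → V → ℝ := fun v w => ∑ i ∈ s, u i v * u i w with hpdef
  set a : V → ℝ := fun v => p v v with hadef
  have hp : ∀ v w, p v w = p w v := by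
    intro v w
    simp only [hpdef]
    exact Finset.sum_congr rfl fun i _ => mul_comm _ _
  have hasq : ∀ v, a v = ∑ i ∈ s, (u i v)^2 := by
    intro v
    simp only [hadef, hpdef]
    exact Finset.sum_congr rfl fun i _ => by ring
  have ha0 : ∀ v, 0 ≤ a v := by
    intro v; rw [hasq v]; positivity
  have ha1 : ∀ v, a v ≤ 1 := by
    intro v
    have h1 : ∑ i, (u i v)^2 = 1 := by
      have := test2 L hH v v
      rw [if_pos rfl] at this
      rw [← this]
      exact Finset.sum_congr rfl fun i _ => by rw [hudef]; ring
    rw [hasq v, ← h1]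
    apply Finset.sum_le_sum_of_subset_of_nonneg (Finset.subset_univ s)
    intro i _ _; exact sq_nonneg _
  have hsum : ∑ v, a v = (k:ℝ) := by
    calc ∑ v, a v = ∑ v, ∑ i ∈ s, (u i v)^2 := Finset.sum_congr rfl fun v _ => hasq v
      _ = ∑ i ∈ s, ∑ v, (u i v)^2 := Finset.sum_comm
      _ = ∑ i ∈ s, (1:ℝ) := by
          refine Finset.sum_congr rfl fun i _ => ?_
          have := test1 L hH i i
          rw [if_pos rfl] at this
          rw [← this]
          exact Finset.sum_congr rfl fun v _ => by rw [hudef]; ring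
      _ = (k:ℝ) := by rw [Finset.sum_const, hscard]; simp
  have hfullrow : ∀ v, ∑ w, (p v w)^2 = a v := by
    intro v
    calc ∑ w, (p v w)^2
        = ∑ w, ∑ i ∈ s, ∑ j ∈ s, (u i v * u j v) * (u i w * u j w) := by
          refine Finset.sum_congr rfl fun w _ => ?_
          simp only [hpdef]
          rw [sq, Finset.sum_mul_sum]
          exact Finset.sum_congr rfl fun i _ => Finset.sum_congr rfl fun j _ => by ring
      _ = ∑ i ∈ s, ∑ j ∈ s, (u i v * u j v) * (∑ w, u i w * u j w) := by
          rw [Finset.sum_comm]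
          refine Finset.sum_congr rfl fun i _ => ?_
          rw [Finset.sum_comm]
          refine Finset.sum_congr rfl fun j _ => ?_
          rw [Finset.mul_sum]
      _ = ∑ i ∈ s, ∑ j ∈ s, (if i = j then u i v * u j v else 0) := by
          refine Finset.sum_congr rfl fun i _ => Finset.sum_congr rfl fun j _ => ?_
          have := test1 L hH i j
          rw [show (∑ w, u i w * u j w) = ∑ w, hH.eigenvectorBasis i w * hH.eigenvectorBasis j w from
            Finset.sum_congr rfl fun w _ => by rw [hudef], this]
          by_cases h : i = j
          · rw [if_pos h, if_pos h, mul_one]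
          · rw [if_neg h, if_neg h, mul_zero]
      _ = ∑ i ∈ s, (u i v)^2 := by
          refine Finset.sum_congr rfl fun i hi => ?_
          rw [Finset.sum_ite_eq s i (fun j => u i v * u j v), if_pos hi]
          ring
      _ = a v := (hasq v).symm
  have hrow : ∀ v, ∑ w ∈ Finset.univ.erase v, (p v w)^2 ≤ a v * (1 - a v) := by
    intro v
    have h1 : (p v v)^2 + ∑ w ∈ Finset.univ.erase v, (p v w)^2 = ∑ w, (p v w)^2 :=
      Finset.add_sum_erase Finset.univ (fun w => (p v w)^2) (Finset.mem_univ v)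
    have h2 : p v v = a v := rfl
    rw [hfullrow v] at h1
    nlinarith [h1]
  -- value identity
  have hid : ∑ i ∈ s, μ i = ∑ v, ∑ w, L v w * p v w := by
    calc ∑ i ∈ s, μ i
        = ∑ i ∈ s, ∑ v, ∑ w, L v w * (u i v * u i w) := by
          refine Finset.sum_congr rfl fun i _ => ?_
          rw [hμdef, hudef]
          exact test3 L hH i
      _ = ∑ v, ∑ w, L v w * p v w := by
          rw [Finset.sum_comm]
          refine Finset.sum_congr rfl fun v _ => ?_
          rw [Finset.sum_comm]
          refine Finset.sum_congr rfl fun w _ => ?_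
          simp only [hpdef]
          rw [Finset.mul_sum]
    -- expand lapMatrix
  have hterm : ∀ v, ∑ w, L v w * p v w
      = (G.degree v : ℝ) * a v - ∑ w ∈ G.neighborFinset v, p v w := by
    intro v
    have e1 : ∀ w, L v w * p v w
        = (if v = w then (G.degree v : ℝ) * p v w else 0) - (if G.Adj v w then p v w else 0) := by
      intro w
      rw [hLdef]
      simp only [SimpleGraph.lapMatrix, Matrix.sub_apply, SimpleGraph.degMatrix,
        Matrix.diagonal_apply, SimpleGraph.adjMatrix_apply]
      split_ifs <;> ring
    calc ∑ w, L v w * p v w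
        = ∑ w, ((if v = w then (G.degree v:ℝ) * p v w else 0)
            - (if G.Adj v w then p v w else 0)) := Finset.sum_congr rfl fun w _ => e1 w
      _ = (∑ w, if v = w then (G.degree v:ℝ) * p v w else 0)
            - (∑ w, if G.Adj v w then p v w else 0) := Finset.sum_sub_distrib _ _
      _ = (G.degree v:ℝ) * p v v - ∑ w ∈ G.neighborFinset v, p v w := by
          rw [Finset.sum_ite_eq Finset.univ v (fun w => (G.degree v:ℝ) * p v w),
            if_pos (Finset.mem_univ v), SimpleGraph.neighborFinset_eq_filter, Finset.sum_filter]
      _ = (G.degree v:ℝ) * a v - ∑ w ∈ G.neighborFinset v, p v w := rfl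
  have hdeg : ∀ v, (G.degree v:ℝ) * a v = ∑ w ∈ G.neighborFinset v, a v := by
    intro v
    rw [Finset.sum_const, SimpleGraph.card_neighborFinset_eq_degree, nsmul_eq_mul]
  have hsplit : ∑ v, ∑ w, L v w * p v w
      = (∑ v, ∑ w ∈ G.neighborFinset v, a v) - (∑ v, ∑ w ∈ G.neighborFinset v, p v w) := by
    rw [← Finset.sum_sub_distrib]
    refine Finset.sum_congr rfl fun v _ => ?_
    rw [hterm v, hdeg v]
  have hedges : (G.edgeFinset.card : ℝ) = (∑ v, ∑ w ∈ G.neighborFinset v, (1:ℝ))/2 := by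
    have h1 := G.sum_degrees_eq_twice_card_edges
    have h2 : ∑ v, ∑ w ∈ G.neighborFinset v, (1:ℝ) = ∑ v, (G.degree v : ℝ) := by
      refine Finset.sum_congr rfl fun v _ => ?_
      rw [Finset.sum_const, SimpleGraph.card_neighborFinset_eq_degree, nsmul_eq_mul, mul_one]
    rw [h2]
    have h3 : (∑ v, (G.degree v:ℝ)) = ((∑ v, G.degree v : ℕ) : ℝ) := by push_cast; rfl
    rw [h3, h1]
    push_cast
    ring
  have e0 : epsK G k = sSup {x : ℝ | ∃ t : Finset V, t.card = k ∧ x = ∑ i ∈ t, μ i}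
      - (G.edgeFinset.card : ℝ) := rfl
  have hfinal : epsK G k
      = (∑ v, ∑ w ∈ G.neighborFinset v, (a v + a w - 1 - 2 * p v w)) / 2 := by
    rw [e0, hsval, hid, hsplit, hedges]
    have swap_a : ∑ v, ∑ w ∈ G.neighborFinset v, a w
        = ∑ v, ∑ w ∈ G.neighborFinset v, a v := nbr_swap G (fun _ w => a w)
    have exp : ∑ v, ∑ w ∈ G.neighborFinset v, (a v + a w - 1 - 2 * p v w)
        = (∑ v, ∑ w ∈ G.neighborFinset v, a v) + (∑ v, ∑ w ∈ G.neighborFinset v, a w)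
          - (∑ v, ∑ w ∈ G.neighborFinset v, (1:ℝ))
          - 2*(∑ v, ∑ w ∈ G.neighborFinset v, p v w) := by
      have inner : ∀ v, ∑ w ∈ G.neighborFinset v, (a v + a w - 1 - 2 * p v w)
          = (∑ w ∈ G.neighborFinset v, a v) + (∑ w ∈ G.neighborFinset v, a w)
            - (∑ w ∈ G.neighborFinset v, (1:ℝ)) - 2*(∑ w ∈ G.neighborFinset v, p v w) := by
        intro v
        rw [Finset.mul_sum, ← Finset.sum_add_distrib, ← Finset.sum_sub_distrib,
          ← Finset.sum_sub_distrib]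
      calc ∑ v, ∑ w ∈ G.neighborFinset v, (a v + a w - 1 - 2 * p v w)
          = ∑ v, ((∑ w ∈ G.neighborFinset v, a v) + (∑ w ∈ G.neighborFinset v, a w)
            - (∑ w ∈ G.neighborFinset v, (1:ℝ)) - 2*(∑ w ∈ G.neighborFinset v, p v w)) :=
            Finset.sum_congr rfl fun v _ => inner v
        _ = _ := by
            rw [Finset.mul_sum, ← Finset.sum_add_distrib, ← Finset.sum_sub_distrib,
              ← Finset.sum_sub_distrib]
    rw [exp, swap_a]
    ring
  rw [hfinal]
  exact core G A hA k hk1 a p ha0 ha1 hsum hp hrow
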